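/- Let T be a finite combinatorial tree on n ≥ 2 nodes with diameter D. Then D ≥ (n−1) / ∑_{i ∈ V} |2 − deg(i)|. -/

import Mathlib

open SimpleGraph Finset

section Aux

variable {V : Type*} [Fintype V] [DecidableEq V] {G : SimpleGraph V} [DecidableRel G.Adj]

lemma aux_deg_pos (hT : G.IsTree) (hn : 2 ≤ Fintype.card V) (v : V) :
    1 ≤ G.degree v := by
  obtain ⟨w, hw⟩ := Fintype.exists_ne_of_one_lt_card (by omega) v
  obtain ⟨p, hp, hpl⟩ := hT.isConnected.exists_path_of_dist v w
  have hlen : 0 < p.length := by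
    rcases Nat.eq_zero_or_pos p.length with h | h
    · exact absurd (SimpleGraph.Walk.eq_of_length_eq_zero h).symm hw
    · exact h
  have hadj : G.Adj v (p.getVert 1) := by
    simpa using p.adj_getVert_succ hlen
  have hmem : p.getVert 1 ∈ G.neighborFinset v := by
    rwa [SimpleGraph.mem_neighborFinset]
  rw [← SimpleGraph.card_neighborFinset_eq_degree]
  exact Finset.card_pos.mpr ⟨_, hmem⟩

lemma aux_up (hT : G.IsTree) {v : V} (r : V) (hdeg : 2 ≤ G.degree v) :
    ∃ w, G.Adj v w ∧ G.dist r w = G.dist r v + 1 := by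
  have hconn := hT.isConnected
  obtain ⟨p, hp, hpl⟩ := hconn.exists_path_of_dist r v
  set u := p.reverse.getVert 1 with hu
  obtain ⟨w, hwmem, hwu⟩ := Finset.exists_mem_ne
    (s := G.neighborFinset v) (by rwa [SimpleGraph.card_neighborFinset_eq_degree]) u
  rw [SimpleGraph.mem_neighborFinset] at hwmem
  obtain ⟨q, hq, hql⟩ := hconn.exists_path_of_dist r w
  by_cases hv : v ∈ q.support
  · refine ⟨w, hwmem, ?_⟩
    have hspec := q.take_spec hv
    have htake : q.takeUntil v hv = p :=
      (hT.existsUnique_path r v).unique (hq.takeUntil hv) hp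
    have hdrop : q.dropUntil v hv = SimpleGraph.Walk.cons hwmem SimpleGraph.Walk.nil :=
      (hT.existsUnique_path v w).unique (hq.dropUntil hv)
        (by simp [SimpleGraph.Walk.cons_isPath_iff, hwmem.ne])
    have hlenq : q.length = p.length + 1 := by
      have := congrArg SimpleGraph.Walk.length hspec
      rw [SimpleGraph.Walk.length_append, htake, hdrop] at this
      simpa using this.symm
    omega
  · exfalso
    have hcons : (SimpleGraph.Walk.cons hwmem q.reverse).IsPath := by
      rw [SimpleGraph.Walk.cons_isPath_iff]
      exact ⟨hq.reverse, by simpa using hv⟩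
    have heq := (hT.existsUnique_path v r).unique hcons hp.reverse
    apply hwu
    have := congrArg (fun t => t.getVert 1) heq
    simpa [SimpleGraph.Walk.getVert_cons_succ, hu] using this

lemma aux_leaf (hT : G.IsTree) (hn : 2 ≤ Fintype.card V) (r v : V) :
    ∃ l, G.degree l = 1 ∧ G.dist r l = G.dist r v + G.dist v l := by
  have key : ∀ m (v : V), Fintype.card V ≤ G.dist r v + m →
      ∃ l, G.degree l = 1 ∧ G.dist r l = G.dist r v + G.dist v l := by
    intro m
    induction m with
    | zero =>
      intro v hv
      exfalso
      obtain ⟨p, hp, hpl⟩ := hT.isConnected.exists_path_of_dist r v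
      have := hp.length_lt
      omega
    | succ m ih =>
      intro v hv
      by_cases hd : G.degree v = 1
      · exact ⟨v, hd, by simp⟩
      · have h2 : 2 ≤ G.degree v := by have := aux_deg_pos hT hn v; omega
        obtain ⟨w, hadj, hw⟩ := aux_up hT r h2
        obtain ⟨l, hl, hld⟩ := ih w (by omega)
        refine ⟨l, hl, ?_⟩
        have t1 : G.dist v l ≤ G.dist v w + G.dist w l := hT.isConnected.dist_triangle
        have t2 : G.dist r l ≤ G.dist r v + G.dist v l := hT.isConnected.dist_triangle
        have hvw : G.dist v w = 1 := SimpleGraph.dist_eq_one_iff_adj.mpr hadj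
        omega
  exact key (Fintype.card V) v (by omega)

lemma aux_inj (hT : G.IsTree) {r v v' l : V}
    (h : G.dist r v = G.dist r v') (hsum : G.dist r l = G.dist r v + G.dist v l)
    (hsum' : G.dist r l = G.dist r v' + G.dist v' l) : v = v' := by
  obtain ⟨P, hP, hPl⟩ := hT.isConnected.exists_path_of_dist r l
  have key : ∀ x : V, G.dist r l = G.dist r x + G.dist x l →
      P.getVert (G.dist r x) = x := by
    intro x hx
    obtain ⟨p, hp, hpl⟩ := hT.isConnected.exists_path_of_dist r x
    obtain ⟨q, hq, hql⟩ := hT.isConnected.exists_path_of_dist x l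
    have hW : (p.append q).length = G.dist r l := by
      rw [SimpleGraph.Walk.length_append]; omega
    have hWp : (p.append q).IsPath := (p.append q).isPath_of_length_eq_dist hW
    have heq : p.append q = P := (hT.existsUnique_path r l).unique hWp hP
    rw [← heq, SimpleGraph.Walk.getVert_append]
    simp [hpl]
  have h1 := key v hsum
  have h2 := key v' hsum'
  rw [h] at h1
  exact h1.symm.trans h2

end Aux

theorem stmt_5 {V : Type*} [Fintype V] [DecidableEq V] (G : SimpleGraph V)
    [DecidableRel G.Adj] (hT : G.IsTree) (hn : 2 ≤ Fintype.card V) :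
    ((Finset.univ.sup fun p : V × V => G.dist p.1 p.2 : ℕ) : ℝ) ≥
      ((Fintype.card V : ℝ) - 1) / ∑ i, |2 - (G.degree i : ℝ)| := by
  classical
  have hne : Nonempty V := Fintype.card_pos_iff.mp (by omega)
  obtain ⟨r⟩ := hne
  set D : ℕ := Finset.univ.sup fun p : V × V => G.dist p.1 p.2 with hD
  set Lset : Finset V := Finset.univ.filter fun l => G.degree l = 1 with hLset
  set L : ℕ := Lset.card with hL
  -- choose leaf function
  choose f hf1 hf2 using aux_leaf hT hn r
  -- counting bound: card V - 1 ≤ D * L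
  have hfiber : ∀ k : ℕ, ((Finset.univ.erase r).filter fun v => G.dist r v = k).card ≤ L := by
    intro k
    apply Finset.card_le_card_of_injOn f
    · intro v _
      simp [hLset, hf1 v]
    · intro v hv v' hv' hff
      simp only [Finset.mem_coe, Finset.mem_filter] at hv hv'
      have h1 := hf2 v
      have h2 := hf2 v'
      rw [hff] at h1
      exact aux_inj hT (by omega) h1 h2
  have hmaps : ∀ v ∈ Finset.univ.erase r, G.dist r v ∈ Finset.Icc 1 D := by
    intro v hv
    have hvr : v ≠ r := (Finset.mem_erase.mp hv).1
    have hpos : 0 < G.dist r v :=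
      (hT.isConnected r v).pos_dist_of_ne (Ne.symm hvr)
    have hle : G.dist r v ≤ D :=
      Finset.le_sup (f := fun p : V × V => G.dist p.1 p.2) (Finset.mem_univ (r, v))
    simp only [Finset.mem_Icc]
    omega
  have hcount : Fintype.card V - 1 ≤ D * L := by
    have hcard : (Finset.univ.erase r).card = Fintype.card V - 1 := by
      rw [Finset.card_erase_of_mem (Finset.mem_univ r), Finset.card_univ]
    calc Fintype.card V - 1 = (Finset.univ.erase r).card := hcard.symm
      _ = ∑ k ∈ Finset.Icc 1 D,
            ((Finset.univ.erase r).filter fun v => G.dist r v = k).card :=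
          Finset.card_eq_sum_card_fiberwise hmaps
      _ ≤ ∑ _k ∈ Finset.Icc 1 D, L := Finset.sum_le_sum fun k _ => hfiber k
      _ = D * L := by simp [Nat.Icc_eq_range', mul_comm]
  -- real estimates
  set S : ℝ := ∑ i, |2 - (G.degree i : ℝ)| with hS
  have hLS : (L : ℝ) ≤ S := by
    have : (L : ℝ) = ∑ i ∈ Lset, |2 - (G.degree i : ℝ)| := by
      rw [Finset.sum_congr rfl (fun i hi => ?_), Finset.sum_const, nsmul_eq_mul, mul_one]
      have : G.degree i = 1 := (Finset.mem_filter.mp hi).2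
      norm_num [this]
    rw [this]
    exact Finset.sum_le_sum_of_subset_of_nonneg (Finset.subset_univ _)
      fun i _ _ => abs_nonneg _
  have hS2 : (2 : ℝ) ≤ S := by
    have hsumdeg : ∑ v, G.degree v = 2 * (Fintype.card V - 1) := by
      have h1 := hT.card_edgeFinset
      rw [G.sum_degrees_eq_twice_card_edges]
      omega
    have hsum : ∑ i, (2 - (G.degree i : ℝ)) = 2 := by
      rw [Finset.sum_sub_distrib, Finset.sum_const, Finset.card_univ, ← Nat.cast_sum,
        hsumdeg]
      have h1 : 1 ≤ Fintype.card V := by omega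
      push_cast [h1]
      ring
    calc (2 : ℝ) = |∑ i, (2 - (G.degree i : ℝ))| := by rw [hsum]; norm_num
      _ ≤ ∑ i, |2 - (G.degree i : ℝ)| := Finset.abs_sum_le_sum_abs _ _
  have hSpos : 0 < S := by linarith
  rw [ge_iff_le, div_le_iff₀ hSpos]
  have hcast : ((Fintype.card V : ℝ) - 1) ≤ ((D * L : ℕ) : ℝ) := by
    have := (Nat.cast_le (α := ℝ)).mpr hcount
    push_cast at this ⊢
    have h1 : 1 ≤ Fintype.card V := by omega
    rw [Nat.cast_sub h1] at this
    · push_cast at this; linarith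
  calc ((Fintype.card V : ℝ) - 1) ≤ ((D * L : ℕ) : ℝ) := hcast
    _ = (D : ℝ) * (L : ℝ) := by push_cast; ring
    _ ≤ (D : ℝ) * S := by
        apply mul_le_mul_of_nonneg_left hLS (by positivity)
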